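/- For d ≥ 5, the star chromatic index of the complete bipartite graph K_{3,d} equals 3⌈d/2⌉. -/

import Mathlib

open SimpleGraph
def gcol (m a v : ℕ) : ℕ := 3 * ((v / 2 + a / 2) % m) + ((a + v % 2) % 3)

lemma gcol_lt (m a v : ℕ) (hm : 0 < m) : gcol m a v < 3 * m := by
  have h1 : (v / 2 + a / 2) % m < m := Nat.mod_lt _ hm
  unfold gcol; omega

lemma mod_cases (m t : ℕ) (h : t < 2 * m) :
    (t % m = t ∧ t < m) ∨ (t % m = t - m ∧ m ≤ t) := by
  rcases Nat.lt_or_ge t m with h' | h'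
  · exact Or.inl ⟨Nat.mod_eq_of_lt h', h'⟩
  · refine Or.inr ⟨?_, h'⟩
    rw [Nat.mod_eq_sub_mod h', Nat.mod_eq_of_lt (by omega)]

section
variable {m a b c u v w : ℕ}

lemma gcol_split (hm : 0 < m) (h : gcol m a u = gcol m b v) :
    (u / 2 + a / 2) % m = (v / 2 + b / 2) % m ∧ (a + u % 2) % 3 = (b + v % 2) % 3 := by
  have h1 : (u / 2 + a / 2) % m < m := Nat.mod_lt _ hm
  have h2 : (v / 2 + b / 2) % m < m := Nat.mod_lt _ hm
  have h3 : (a + u % 2) % 3 < 3 := Nat.mod_lt _ (by omega)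
  have h4 : (b + v % 2) % 3 < 3 := Nat.mod_lt _ (by omega)
  unfold gcol at h
  generalize (u / 2 + a / 2) % m = X at *
  generalize (v / 2 + b / 2) % m = Y at *
  generalize (a + u % 2) % 3 = S at *
  generalize (b + v % 2) % 3 = T at *
  omega

lemma qlem {j j' wa wb wc : ℕ} (hm : 3 ≤ m) (hj : j < m) (hj' : j' < m)
    (hwa : wa ≤ 1) (hwb : wb ≤ 1) (hwc : wc ≤ 1)
    (h1 : (j + wa) % m = (j' + wb) % m) (h2 : (j + wb) % m = (j' + wc) % m) :
    wa + wc = 2 * wb := by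
  rcases mod_cases m (j + wa) (by omega) with ⟨e1, l1⟩ | ⟨e1, l1⟩ <;>
  rcases mod_cases m (j' + wb) (by omega) with ⟨e2, l2⟩ | ⟨e2, l2⟩ <;>
  rcases mod_cases m (j + wb) (by omega) with ⟨e3, l3⟩ | ⟨e3, l3⟩ <;>
  rcases mod_cases m (j' + wc) (by omega) with ⟨e4, l4⟩ | ⟨e4, l4⟩ <;>
  omega

lemma gcol_inj (hm : 3 ≤ m) (ha : a < 3) (hu : u < 2 * m) (hv : v < 2 * m)
    (h : gcol m a u = gcol m a v) : u = v := by
  obtain ⟨hq, hs⟩ := gcol_split (by omega) h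
  have := qlem (j := u / 2) (j' := v / 2) (wa := a / 2) (wb := a / 2) (wc := a / 2)
    hm (by omega) (by omega) (by omega) (by omega) (by omega) hq hq
  rcases mod_cases m (u / 2 + a / 2) (by omega) with ⟨e1, l1⟩ | ⟨e1, l1⟩ <;>
  rcases mod_cases m (v / 2 + a / 2) (by omega) with ⟨e2, l2⟩ | ⟨e2, l2⟩ <;>
  omega

lemma gcol_col (hm : 3 ≤ m) (ha : a < 3) (hb : b < 3) (hab : a ≠ b) (hv : v < 2 * m) :
    gcol m a v ≠ gcol m b v := by
  intro h
  obtain ⟨hq, hs⟩ := gcol_split (by omega) h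
  omega

lemma gcol_C1 (hm : 3 ≤ m) (ha : a < 3) (hb : b < 3) (hc : c < 3)
    (hu : u < 2 * m) (hv : v < 2 * m) (huv : u ≠ v) (hab : a ≠ b) (hbc : b ≠ c) :
    ¬(gcol m a u = gcol m b v ∧ gcol m b u = gcol m c v) := by
  rintro ⟨h1, h2⟩
  obtain ⟨hq1, hs1⟩ := gcol_split (by omega) h1
  obtain ⟨hq2, hs2⟩ := gcol_split (by omega) h2
  have hk := qlem (j := u / 2) (j' := v / 2) (wa := a / 2) (wb := b / 2) (wc := c / 2)
    hm (by omega) (by omega) (by omega) (by omega) (by omega) hq1 hq2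
  clear h1 h2 hq1 hq2
  interval_cases a <;> interval_cases b <;> interval_cases c <;> omega

lemma gcol_C2 (hm : 3 ≤ m) (ha : a < 3) (hb : b < 3) (hab : a ≠ b)
    (hu : u < 2 * m) (hv : v < 2 * m) (hw : w < 2 * m) :
    ¬(gcol m a u = gcol m b v ∧ gcol m a v = gcol m b w) := by
  rintro ⟨h1, h2⟩
  obtain ⟨hq1, hs1⟩ := gcol_split (by omega) h1
  obtain ⟨hq2, hs2⟩ := gcol_split (by omega) h2
  clear h1 h2 hq1 hq2
  interval_cases a <;> interval_cases b <;> omega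
end


/-- the symmetric two-argument coloring function -/
def nfun (d : ℕ) (hd : 5 ≤ d) : (Fin 3 ⊕ Fin d) → (Fin 3 ⊕ Fin d) → Fin (3 * ((d + 1) / 2))
  | .inl a, .inr v => ⟨gcol ((d + 1) / 2) a v, gcol_lt _ _ _ (by omega)⟩
  | .inr v, .inl a => ⟨gcol ((d + 1) / 2) a v, gcol_lt _ _ _ (by omega)⟩
  | _, _ => ⟨0, by omega⟩

lemma nfun_symm (d : ℕ) (hd : 5 ≤ d) (x y : Fin 3 ⊕ Fin d) :
    nfun d hd x y = nfun d hd y x := by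
  rcases x with a | u <;> rcases y with b | v <;> rfl

def ccol (d : ℕ) (hd : 5 ≤ d) : Sym2 (Fin 3 ⊕ Fin d) → Fin (3 * ((d + 1) / 2)) :=
  Sym2.lift ⟨nfun d hd, nfun_symm d hd⟩

lemma ccol_lr (d : ℕ) (hd : 5 ≤ d) (a : Fin 3) (v : Fin d) :
    ccol d hd s(.inl a, .inr v) = ⟨gcol ((d + 1) / 2) a v, gcol_lt _ _ _ (by omega)⟩ := rfl

lemma ccol_rl (d : ℕ) (hd : 5 ≤ d) (a : Fin 3) (v : Fin d) :
    ccol d hd s(.inr v, .inl a) = ⟨gcol ((d + 1) / 2) a v, gcol_lt _ _ _ (by omega)⟩ := rfl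

lemma edge_form {d : ℕ} {e : Sym2 (Fin 3 ⊕ Fin d)}
    (he : e ∈ (completeBipartiteGraph (Fin 3) (Fin d)).edgeSet) :
    ∃ a v, e = s(Sum.inl a, Sum.inr v) := by
  induction e using Sym2.ind with
  | _ x y =>
    rw [mem_edgeSet] at he
    rcases x with a | u <;> rcases y with b | v <;> simp at he
    · exact ⟨a, v, rfl⟩
    · exact ⟨b, u, Sym2.eq_swap⟩


lemma three_le_card {α : Type*} [DecidableEq α] {x y z w : α}
    (hxy : x ≠ y) (hyz : y ≠ z) (hzw : z ≠ w) (hC : ¬(x = z ∧ y = w)) :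
    3 ≤ ({x, y, z, w} : Finset α).card := by
  by_cases hxz : x = z
  · subst hxz
    have hyw : y ≠ w := fun h => hC ⟨rfl, h⟩
    have he : ({x, y, x, w} : Finset α) = {x, y, w} := by
      ext t; simp; tauto
    rw [he, Finset.card_insert_of_notMem (by simp [hxy, hzw]),
      Finset.card_insert_of_notMem (by simp [hyw]), Finset.card_singleton]
  · have hsub : ({x, y, z} : Finset α) ⊆ {x, y, z, w} := by
      intro t; simp; tauto
    have hcard : ({x, y, z} : Finset α).card = 3 := by
      rw [Finset.card_insert_of_notMem (by simp [hxy, hxz]),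
        Finset.card_insert_of_notMem (by simp [hyz]), Finset.card_singleton]
    exact hcard ▸ Finset.card_le_card hsub



/-- A star edge coloring: a proper edge coloring with no 2-colored path or cycle
on four edges. For proper colorings, this is equivalent to requiring that every
walk of length 4 with pairwise distinct edges sees at least 3 colors. -/
def IsStarEdgeColoring {V β : Type*} [DecidableEq β] (G : SimpleGraph V)
    (c : Sym2 V → β) : Prop :=
  (∀ ⦃e₁⦄, e₁ ∈ G.edgeSet → ∀ ⦃e₂⦄, e₂ ∈ G.edgeSet → e₁ ≠ e₂ →
      (∃ v, v ∈ e₁ ∧ v ∈ e₂) → c e₁ ≠ c e₂) ∧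
  ∀ (u v : V) (p : G.Walk u v), p.length = 4 → p.edges.Nodup →
    3 ≤ (p.edges.map c).toFinset.card

/-- The star chromatic index: the least `n` such that `G` has a star edge
coloring with colors in `Fin n`. -/
noncomputable def starChromaticIndex {V : Type*} (G : SimpleGraph V) : ℕ :=
  sInf {n | ∃ c : Sym2 V → Fin n, IsStarEdgeColoring G c}


theorem upper (d : ℕ) (hd : 5 ≤ d) :
    IsStarEdgeColoring (completeBipartiteGraph (Fin 3) (Fin d)) (ccol d hd) := by
  have hm : 3 ≤ (d + 1) / 2 := by omega
  have hdm : d ≤ 2 * ((d + 1) / 2) := by omega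
  constructor
  · intro e1 he1 e2 he2 hne ⟨z, hz1, hz2⟩
    obtain ⟨a, u, rfl⟩ := edge_form he1
    obtain ⟨b, v, rfl⟩ := edge_form he2
    rw [ccol_lr, ccol_lr]
    simp only [ne_eq, Fin.mk.injEq]
    rw [Sym2.mem_iff] at hz1 hz2
    rcases hz1 with h1 | h1 <;> rcases hz2 with h2 | h2 <;> subst h1 <;>
      first
      | exact absurd h2 Sum.inl_ne_inr
      | exact absurd h2 Sum.inr_ne_inl
      | (injection h2 with h2)
    · -- a = b, so u ≠ v
      subst h2
      have huv : u ≠ v := fun h => hne (by rw [h])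
      intro h
      exact huv (Fin.ext (gcol_inj hm a.isLt (by omega) (by omega) h))
    · -- u = v, a ≠ b
      subst h2
      have hab : a ≠ b := fun h => hne (by rw [h])
      exact gcol_col hm a.isLt b.isLt (fun h => hab (Fin.ext h)) (by omega)
  · intro x y p hlen hnodup
    obtain _ | ⟨h1, p⟩ := p; · simp at hlen
    obtain _ | ⟨h2, p⟩ := p; · simp at hlen
    obtain _ | ⟨h3, p⟩ := p; · simp at hlen
    obtain _ | ⟨h4, p⟩ := p; · simp at hlen
    obtain _ | ⟨h5, p⟩ := p
    swap
    · simp [Walk.length_cons] at hlen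
    clear hlen
    rename_i z1 z2 z3
    simp only [Walk.edges_cons, Walk.edges_nil] at hnodup ⊢
    rcases x with a0 | u0 <;> rcases z1 with a1 | u1 <;> rcases z2 with a2 | u2 <;>
      rcases z3 with a3 | u3 <;> rcases y with a4 | u4 <;>
      simp only [completeBipartiteGraph_adj, Sum.isLeft_inl, Sum.isRight_inr, Sum.isLeft_inr,
        Sum.isRight_inl, and_true, true_and, and_false, false_and, or_false, false_or,
        Bool.false_eq_true, or_self, and_self, or_true, true_or] at h1 h2 h3 h4
    · -- left-start walk: a0 - u1 - a2 - u3 - a4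
      simp only [List.nodup_cons, List.mem_cons, List.not_mem_nil, List.mem_singleton,
        or_false, List.nodup_nil, and_true, not_or] at hnodup
      obtain ⟨⟨h12, -, -⟩, ⟨h23, -⟩, h34, -⟩ := hnodup
      have ha02 : a0 ≠ a2 := fun h => h12 (by rw [h]; exact Sym2.eq_swap)
      have hu13 : u1 ≠ u3 := fun h => h23 (by rw [h]; exact Sym2.eq_swap)
      have ha24 : a2 ≠ a4 := fun h => h34 (by rw [h]; exact Sym2.eq_swap)
      simp only [List.map_cons, List.map_nil, ccol_lr, ccol_rl, List.toFinset_cons,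
        List.toFinset_nil, insert_empty_eq]
      refine three_le_card ?_ ?_ ?_ ?_
      · exact fun h => gcol_col hm a0.isLt a2.isLt (fun e => ha02 (Fin.ext e)) (by omega)
          (congrArg Fin.val h)
      · exact fun h => hu13 (Fin.ext (gcol_inj hm a2.isLt (by omega) (by omega)
          (congrArg Fin.val h)))
      · exact fun h => gcol_col hm a2.isLt a4.isLt (fun e => ha24 (Fin.ext e)) (by omega)
          (congrArg Fin.val h)
      · rintro ⟨hA, hB⟩
        exact gcol_C1 hm a0.isLt a2.isLt a4.isLt (by omega) (by omega)
          (fun e => hu13 (Fin.ext e)) (fun e => ha02 (Fin.ext e)) (fun e => ha24 (Fin.ext e))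
          ⟨congrArg Fin.val hA, congrArg Fin.val hB⟩
    · -- right-start walk: u0 - a1 - u2 - a3 - u4
      simp only [List.nodup_cons, List.mem_cons, List.not_mem_nil, List.mem_singleton,
        or_false, List.nodup_nil, and_true, not_or] at hnodup
      obtain ⟨⟨h12, -, -⟩, ⟨h23, -⟩, h34, -⟩ := hnodup
      have hu02 : u0 ≠ u2 := fun h => h12 (by rw [h]; exact Sym2.eq_swap)
      have ha13 : a1 ≠ a3 := fun h => h23 (by rw [h]; exact Sym2.eq_swap)
      have hu24 : u2 ≠ u4 := fun h => h34 (by rw [h]; exact Sym2.eq_swap)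
      simp only [List.map_cons, List.map_nil, ccol_lr, ccol_rl, List.toFinset_cons,
        List.toFinset_nil, insert_empty_eq]
      refine three_le_card ?_ ?_ ?_ ?_
      · exact fun h => hu02 (Fin.ext (gcol_inj hm a1.isLt (by omega) (by omega)
          (congrArg Fin.val h)))
      · exact fun h => gcol_col hm a1.isLt a3.isLt (fun e => ha13 (Fin.ext e)) (by omega)
          (congrArg Fin.val h)
      · exact fun h => hu24 (Fin.ext (gcol_inj hm a3.isLt (by omega) (by omega)
          (congrArg Fin.val h)))
      · rintro ⟨hA, hB⟩
        exact gcol_C2 hm a1.isLt a3.isLt (fun e => ha13 (Fin.ext e)) (by omega) (by omega)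
          (by omega) ⟨congrArg Fin.val hA, congrArg Fin.val hB⟩

theorem lower {d n : ℕ} (hd : 5 ≤ d) (c : Sym2 (Fin 3 ⊕ Fin d) → Fin n)
    (hc : IsStarEdgeColoring (completeBipartiteGraph (Fin 3) (Fin d)) c) :
    3 * ((d + 1) / 2) ≤ n := by
  classical
  set g : Fin 3 → Fin d → Fin n := fun a v => c s(Sum.inl a, Sum.inr v) with hgdef
  have hg : ∀ a v, c s(Sum.inl a, Sum.inr v) = g a v := fun _ _ => rfl
  have hedge : ∀ (a : Fin 3) (v : Fin d),
      s(Sum.inl a, Sum.inr v) ∈ (completeBipartiteGraph (Fin 3) (Fin d)).edgeSet := by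
    intro a v; rw [SimpleGraph.mem_edgeSet]; simp
  -- proper coloring facts
  have hinj : ∀ a : Fin 3, Function.Injective (g a) := by
    intro a u v h
    by_contra huv
    refine hc.1 (hedge a u) (hedge a v) ?_ ⟨Sum.inl a, by simp, by simp⟩ h
    intro he
    apply huv
    simpa using he
  have hcolv : ∀ (v : Fin d) ⦃a b : Fin 3⦄, a ≠ b → g a v ≠ g b v := by
    intro v a b hab
    refine hc.1 (hedge a v) (hedge b v) ?_ ⟨Sum.inr v, by simp, by simp⟩
    intro he
    apply hab
    simpa using he
  -- the key consequence of the star property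
  have lemA : ∀ ⦃a b : Fin 3⦄, a ≠ b → ∀ ⦃u v : Fin d⦄, g a u = g b v →
      ∀ w, g a v ≠ g b w := by
    intro a b hab u v h w
    have huv : u ≠ v := by rintro rfl; exact hcolv u hab h
    by_cases hwv : w = v
    · subst hwv; exact fun h' => hcolv w hab h'
    · intro h2
      have hadj1 : (completeBipartiteGraph (Fin 3) (Fin d)).Adj (Sum.inr u) (Sum.inl a) := by simp
      have hadj2 : (completeBipartiteGraph (Fin 3) (Fin d)).Adj (Sum.inl a) (Sum.inr v) := by simp
      have hadj3 : (completeBipartiteGraph (Fin 3) (Fin d)).Adj (Sum.inr v) (Sum.inl b) := by simp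
      have hadj4 : (completeBipartiteGraph (Fin 3) (Fin d)).Adj (Sum.inl b) (Sum.inr w) := by simp
      have h4 := hc.2 _ _ (Walk.cons hadj1 (Walk.cons hadj2 (Walk.cons hadj3
        (Walk.cons hadj4 Walk.nil)))) (by simp) ?nodup
      case nodup =>
        simp only [Walk.edges_cons, Walk.edges_nil, List.nodup_cons, List.mem_cons,
          List.not_mem_nil, List.mem_singleton, or_false, List.nodup_nil, and_true, not_or,
          Sym2.eq_iff]
        simp only [Sum.inl.injEq, Sum.inr.injEq, Sum.inl_ne_inr, Sum.inr_ne_inl,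
          false_and, and_false, or_false, false_or, not_and, not_false_iff, and_true, true_and]
        try tauto
      have m1 : c s(Sum.inr u, Sum.inl a) = g a u := congrArg c Sym2.eq_swap
      have m3 : c s(Sum.inr v, Sum.inl b) = g b v := congrArg c Sym2.eq_swap
      rw [Walk.edges_cons, Walk.edges_cons, Walk.edges_cons, Walk.edges_cons,
        Walk.edges_nil] at h4
      simp only [List.map_cons, List.map_nil, m1, m3, hg, List.toFinset_cons,
        List.toFinset_nil, insert_empty_eq] at h4
      rw [← h, ← h2] at h4
      have hcard : ({g a u, g a v, g a u, g a v} : Finset (Fin n)) = {g a u, g a v} := by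
        ext t; simp; try tauto
      rw [hcard] at h4
      have : ({g a u, g a v} : Finset (Fin n)).card ≤ 2 :=
        (Finset.card_insert_le _ _).trans (by simp)
      omega
  -- counting
  set A : Fin 3 → Finset (Fin n) := fun a => Finset.image (g a) Finset.univ with hAdef
  have hcardA : ∀ a, (A a).card = d := by
    intro a
    rw [hAdef]
    rw [Finset.card_image_of_injective _ (hinj a), Finset.card_univ, Fintype.card_fin]
  have hI : ∀ a b : Fin 3, a ≠ b → (A a ∩ A b).card + (A a ∩ A b).card ≤ d := by
    intro a b hab
    set T : Finset (Fin d) := Finset.univ.filter (fun v => g b v ∈ A a) with hT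
    have h1 : A a ∩ A b = Finset.image (g b) T := by
      ext t
      simp only [Finset.mem_inter, hAdef, Finset.mem_image, hT, Finset.mem_filter,
        Finset.mem_univ, true_and]
      constructor
      · rintro ⟨⟨u, hu⟩, ⟨v, hv⟩⟩
        exact ⟨v, by rw [hv]; exact ⟨u, hu⟩, hv⟩
      · rintro ⟨v, hv, rfl⟩
        exact ⟨hv, ⟨v, rfl⟩⟩
    have h2 : Finset.image (g a) T ⊆ A a \ A b := by
      intro t ht
      rcases Finset.mem_image.1 ht with ⟨v, hvT, rfl⟩
      have hmem := (Finset.mem_filter.1 hvT).2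
      rw [hAdef] at hmem
      rcases Finset.mem_image.1 hmem with ⟨u, -, hu⟩
      refine Finset.mem_sdiff.2 ⟨Finset.mem_image.2 ⟨v, Finset.mem_univ v, rfl⟩, ?_⟩
      intro hb
      rcases Finset.mem_image.1 hb with ⟨w, -, hw⟩
      exact lemA hab hu w hw.symm
    have e1 : (A a ∩ A b).card = T.card := by
      rw [h1, Finset.card_image_of_injective _ (hinj b)]
    have e2 : T.card = (Finset.image (g a) T).card :=
      (Finset.card_image_of_injective _ (hinj a)).symm
    have e3 : (Finset.image (g a) T).card ≤ (A a \ A b).card := Finset.card_le_card h2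
    have e4 : (A a \ A b).card + (A a ∩ A b).card = (A a).card :=
      Finset.card_sdiff_add_card_inter _ _
    have := hcardA a
    omega
  have hun : (A 0 ∪ A 1 ∪ A 2).card ≤ n := by
    calc (A 0 ∪ A 1 ∪ A 2).card ≤ (Finset.univ : Finset (Fin n)).card :=
          Finset.card_le_univ _
      _ = n := by simp
  have u2 : (A 0 ∪ A 1).card + (A 0 ∩ A 1).card = (A 0).card + (A 1).card :=
    Finset.card_union_add_card_inter _ _
  have u3 : (A 0 ∪ A 1 ∪ A 2).card + ((A 0 ∪ A 1) ∩ A 2).card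
      = (A 0 ∪ A 1).card + (A 2).card := Finset.card_union_add_card_inter _ _
  have hsub : (A 0 ∪ A 1) ∩ A 2 ⊆ (A 0 ∩ A 2) ∪ (A 1 ∩ A 2) := by
    intro t ht; simp only [Finset.mem_inter, Finset.mem_union] at *; tauto
  have hsub2 := Finset.card_le_card hsub
  have hsub3 := Finset.card_union_le (A 0 ∩ A 2) (A 1 ∩ A 2)
  have i01 := hI 0 1 (by decide)
  have i02 := hI 0 2 (by decide)
  have i12 := hI 1 2 (by decide)
  have c0 := hcardA 0
  have c1 := hcardA 1
  have c2 := hcardA 2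
  rcases Nat.even_or_odd d with ⟨t, ht⟩ | ⟨t, ht⟩ <;> subst ht <;> omega

theorem starChromaticIndex_K3d (d : ℕ) (hd : 5 ≤ d) :
    starChromaticIndex (completeBipartiteGraph (Fin 3) (Fin d)) = 3 * ((d + 1) / 2) := by
  have hmem : 3 * ((d + 1) / 2) ∈
      {n | ∃ c : Sym2 (Fin 3 ⊕ Fin d) → Fin n,
        IsStarEdgeColoring (completeBipartiteGraph (Fin 3) (Fin d)) c} :=
    ⟨ccol d hd, upper d hd⟩
  unfold starChromaticIndex
  refine le_antisymm (Nat.sInf_le hmem) ?_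
  obtain ⟨c, hc⟩ := Nat.sInf_mem (Set.nonempty_of_mem hmem)
  exact lower hd c hc
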